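/- Conditional-entropy expansion of an optimizer (equation (14) of Theorem 1's proof): suppose random variables X : Ω → 𝒳, Y : Ω → 𝒴, U : Ω → 𝒰 (finite-valued, on a common probability space) satisfy I[X:U] = 0, I[X:U|Y] = 0, and H[Y|(X,U)] = 0. Then for every x ∈ 𝒳 with μ(X = x) > 0, H[U] = H[Y | X ← x] + Σ_{y ∈ 𝒴} μ(Y = y | X = x) · H[U | Y ← y], where any term with μ(Y = y | X = x) = 0 is taken to be 0. -/

import Mathlib

open MeasureTheory ProbabilityTheory Real

noncomputable section

variable {Ω : Type*} [MeasurableSpace Ω]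

/-- Shannon entropy (natural logarithm) of a finite-valued random variable `Z` under `μ`. -/
def ent {S : Type*} [Fintype S] (μ : Measure Ω) (Z : Ω → S) : ℝ :=
  ∑ z : S, Real.negMulLog (μ (Z ⁻¹' {z})).toReal

/-- Conditional entropy `H[Z₁ | Z₂] = H[(Z₁,Z₂)] - H[Z₂]`. -/
def condEnt {S T : Type*} [Fintype S] [Fintype T] (μ : Measure Ω)
    (Z₁ : Ω → S) (Z₂ : Ω → T) : ℝ :=
  ent μ (fun ω => (Z₁ ω, Z₂ ω)) - ent μ Z₂

/-- Mutual information `I[Z₁ : Z₂] = H[Z₁] + H[Z₂] - H[(Z₁,Z₂)]`. -/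
def mutInfo {S T : Type*} [Fintype S] [Fintype T] (μ : Measure Ω)
    (Z₁ : Ω → S) (Z₂ : Ω → T) : ℝ :=
  ent μ Z₁ + ent μ Z₂ - ent μ (fun ω => (Z₁ ω, Z₂ ω))

/-- Conditional mutual information
`I[Z₁ : Z₂ | Z₃] = H[(Z₁,Z₃)] + H[(Z₂,Z₃)] - H[(Z₁,Z₂,Z₃)] - H[Z₃]`. -/
def condMutInfo {S T R : Type*} [Fintype S] [Fintype T] [Fintype R] (μ : Measure Ω)
    (Z₁ : Ω → S) (Z₂ : Ω → T) (Z₃ : Ω → R) : ℝ :=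
  ent μ (fun ω => (Z₁ ω, Z₃ ω)) + ent μ (fun ω => (Z₂ ω, Z₃ ω))
    - ent μ (fun ω => (Z₁ ω, Z₂ ω, Z₃ ω)) - ent μ Z₃

section AuxLemmas
open Finset

/-- Super-additivity of negMulLog on nonneg reals, with the key pointwise bound. -/
lemma aux_key {ι : Type*} [Fintype ι] (p : ι → ℝ) (hp : ∀ i, 0 ≤ p i) :
    ∀ i, 0 ≤ (p i * Real.log (∑ j, p j) + Real.negMulLog (p i)) := by
  intro i
  rcases eq_or_lt_of_le (hp i) with h | h
  · simp [← h]
  · have hle : p i ≤ ∑ j, p j := Finset.single_le_sum (fun j _ => hp j) (Finset.mem_univ i)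
    have : Real.log (p i) ≤ Real.log (∑ j, p j) := Real.log_le_log h hle
    have := mul_le_mul_of_nonneg_left this (hp i)
    simp only [Real.negMulLog, neg_mul]
    linarith

lemma aux_sum_key {ι : Type*} [Fintype ι] (p : ι → ℝ) :
    ∑ i, (p i * Real.log (∑ j, p j) + Real.negMulLog (p i))
      = ∑ i, Real.negMulLog (p i) - Real.negMulLog (∑ j, p j) := by
  rw [Finset.sum_add_distrib, ← Finset.sum_mul]
  simp [Real.negMulLog]
  ring

lemma aux_negMulLog_sum_le {ι : Type*} [Fintype ι] (p : ι → ℝ) (hp : ∀ i, 0 ≤ p i) :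
    Real.negMulLog (∑ i, p i) ≤ ∑ i, Real.negMulLog (p i) := by
  have h := Finset.sum_nonneg (s := Finset.univ) (fun i (_ : i ∈ Finset.univ) => aux_key p hp i)
  rw [aux_sum_key] at h
  linarith

lemma aux_support_unique {ι : Type*} [Fintype ι] (p : ι → ℝ) (hp : ∀ i, 0 ≤ p i)
    (h : ∑ i, Real.negMulLog (p i) ≤ Real.negMulLog (∑ i, p i)) :
    ∀ i j, p i ≠ 0 → p j ≠ 0 → i = j := by
  have hz : ∀ i, p i * Real.log (∑ j, p j) + Real.negMulLog (p i) = 0 := by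
    intro i
    have hsum : ∑ i, (p i * Real.log (∑ j, p j) + Real.negMulLog (p i)) ≤ 0 := by
      rw [aux_sum_key]; linarith
    have := (Finset.sum_eq_zero_iff_of_nonneg (fun i _ => aux_key p hp i)).1
      (le_antisymm hsum (Finset.sum_nonneg (fun i _ => aux_key p hp i)))
    exact this i (Finset.mem_univ i)
  have hPeq : ∀ i, p i ≠ 0 → p i = ∑ j, p j := by
    intro i hi
    have hpos : 0 < p i := lt_of_le_of_ne (hp i) (Ne.symm hi)
    have := hz i
    simp only [Real.negMulLog, neg_mul] at this
    have hlog : Real.log (∑ j, p j) = Real.log (p i) := by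
      have : p i * (Real.log (∑ j, p j) - Real.log (p i)) = 0 := by linarith
      rcases mul_eq_zero.1 this with h' | h'
      · exact absurd h' hi
      · linarith
    have hPpos : 0 < ∑ j, p j :=
      lt_of_lt_of_le hpos (Finset.single_le_sum (fun j _ => hp j) (Finset.mem_univ i))
    have := Real.log_injOn_pos (Set.mem_Ioi.2 hPpos) (Set.mem_Ioi.2 hpos) hlog
    exact this.symm
  intro i j hi hj
  by_contra hij
  classical
  have h2 : p i + p j ≤ ∑ k, p k := by
    have := Finset.sum_le_sum_of_subset_of_nonneg
      (Finset.subset_univ ({i, j} : Finset ι)) (fun k _ _ => hp k)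
    rwa [Finset.sum_pair hij] at this
  have hpi := hPeq i hi
  have hpj := hPeq j hj
  have hpos : 0 < p i := lt_of_le_of_ne (hp i) (Ne.symm hi)
  linarith

/-- negMulLog turns a sum with at most one nonzero term into the sum of negMulLogs. -/
lemma aux_negMulLog_single {ι : Type*} [Fintype ι] (f : ι → ℝ)
    (h : ∀ i j, f i ≠ 0 → f j ≠ 0 → i = j) :
    Real.negMulLog (∑ i, f i) = ∑ i, Real.negMulLog (f i) := by
  by_cases hall : ∀ i, f i = 0
  · simp [hall]
  push_neg at hall
  obtain ⟨i0, hi0⟩ := hall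
  have hs : ∑ i, f i = f i0 :=
    Finset.sum_eq_single_of_mem i0 (Finset.mem_univ i0)
      (fun j _ hj => by by_contra hc; exact hj (h j i0 hc hi0))
  have hs2 : ∑ i, Real.negMulLog (f i) = Real.negMulLog (f i0) :=
    Finset.sum_eq_single_of_mem i0 (Finset.mem_univ i0)
      (fun j _ hj => by
        by_cases hc : f j = 0
        · simp [hc]
        · exact absurd (h j i0 hc hi0) hj)
  rw [hs, hs2]

/-- Gibbs' inequality equality case. -/
lemma aux_gibbs {ι : Type*} [Fintype ι] (w p : ι → ℝ) (hw : ∀ i, 0 ≤ w i) (hp : ∀ i, 0 ≤ p i)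
    (hz : ∀ i, w i = 0 → p i = 0) (hw1 : ∑ i, w i = 1) (hp1 : ∑ i, p i = 1)
    (h0 : ∑ i, (p i * Real.log (p i) - p i * Real.log (w i)) ≤ 0) :
    ∀ i, p i = w i := by
  classical
  set f : ℝ → ℝ := fun t => t * Real.log t with hf
  set q : ι → ℝ := fun i => p i / w i with hq
  have hmem : ∀ i ∈ Finset.univ (α := ι), q i ∈ Set.Ici (0:ℝ) :=
    fun i _ => Set.mem_Ici.2 (div_nonneg (hp i) (hw i))
  have hcenter : ∑ i, w i • q i = 1 := by
    rw [← hp1]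
    refine Finset.sum_congr rfl (fun i _ => ?_)
    by_cases hwi : w i = 0
    · simp [hq, hwi, hz i hwi]
    · simp only [hq, smul_eq_mul]
      field_simp
  have hrhs : ∑ i, w i • f (q i) = ∑ i, (p i * Real.log (p i) - p i * Real.log (w i)) := by
    refine Finset.sum_congr rfl (fun i _ => ?_)
    by_cases hwi : w i = 0
    · simp [hq, hwi, hz i hwi, hf]
    · by_cases hpi : p i = 0
      · simp [hq, hpi, hf]
      · have hwpos : 0 < w i := lt_of_le_of_ne (hw i) (Ne.symm hwi)
        have hppos : 0 < p i := lt_of_le_of_ne (hp i) (Ne.symm hpi)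
        simp only [hq, hf, smul_eq_mul]
        rw [Real.log_div hpi hwi]
        field_simp
  have hjensen : f (∑ i, w i • q i) ≤ ∑ i, w i • f (q i) :=
    Real.convexOn_mul_log.map_sum_le (fun i _ => hw i) hw1 hmem
  have hone : f 1 = 0 := by simp [hf]
  rw [hcenter, hone] at hjensen
  have heq : f (∑ i, w i • q i) = ∑ i, w i • f (q i) := by
    rw [hcenter, hone]
    rw [hrhs]
    linarith
  have := (Real.strictConvexOn_mul_log.map_sum_eq_iff' (fun i _ => hw i) hw1 hmem).1 heq
  intro i
  by_cases hwi : w i = 0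
  · rw [hz i hwi, hwi]
  · have := this i (Finset.mem_univ i) hwi
    rw [hcenter] at this
    have hwpos : 0 < w i := lt_of_le_of_ne (hw i) (Ne.symm hwi)
    simp only [hq] at this
    field_simp at this
    linarith [this]

/-- Decomposition of a measure of a set along fibers of a finite-valued map. -/
lemma aux_meas_decomp {S : Type*} [Fintype S] [MeasurableSpace S] [MeasurableSingletonClass S]
    (μ : Measure Ω) [IsFiniteMeasure μ] (Z : Ω → S) (hZ : Measurable Z) (s : Set Ω) :
    (μ s).toReal = ∑ z : S, (μ (s ∩ Z ⁻¹' {z})).toReal := by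
  rw [← ENNReal.toReal_sum (fun z _ => measure_ne_top μ _)]
  congr 1
  have h1 : ∀ z : S, μ (s ∩ Z ⁻¹' {z}) = μ.restrict s (Z ⁻¹' {z}) := by
    intro z
    rw [Measure.restrict_apply (hZ (measurableSet_singleton z)), Set.inter_comm]
  simp_rw [h1]
  rw [sum_measure_preimage_singleton Finset.univ
    (fun z _ => hZ (measurableSet_singleton z))]
  simp [Measure.restrict_apply_univ]

/-- Entropy of a pair as a double sum over fiber intersections. -/
lemma aux_ent_pair {S T : Type*} [Fintype S] [Fintype T] (μ : Measure Ω)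
    (Z₁ : Ω → S) (Z₂ : Ω → T) :
    ent μ (fun ω => (Z₁ ω, Z₂ ω))
      = ∑ s : S, ∑ t : T, Real.negMulLog (μ (Z₁ ⁻¹' {s} ∩ Z₂ ⁻¹' {t})).toReal := by
  rw [ent, Fintype.sum_prod_type]
  refine Finset.sum_congr rfl fun s _ => Finset.sum_congr rfl fun t _ => ?_
  congr 3
  ext ω
  simp [Prod.ext_iff]

/-- Entropy of a triple as a triple sum over fiber intersections. -/
lemma aux_ent_triple {S T R : Type*} [Fintype S] [Fintype T] [Fintype R] (μ : Measure Ω)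
    (Z₁ : Ω → S) (Z₂ : Ω → T) (Z₃ : Ω → R) :
    ent μ (fun ω => (Z₁ ω, Z₂ ω, Z₃ ω))
      = ∑ s : S, ∑ t : T, ∑ r : R,
          Real.negMulLog (μ (Z₁ ⁻¹' {s} ∩ Z₂ ⁻¹' {t} ∩ Z₃ ⁻¹' {r})).toReal := by
  rw [ent, Fintype.sum_prod_type]
  refine Finset.sum_congr rfl fun s _ => ?_
  rw [Fintype.sum_prod_type]
  refine Finset.sum_congr rfl fun t _ => Finset.sum_congr rfl fun r _ => ?_
  congr 3
  ext ω
  simp only [Set.mem_preimage, Set.mem_singleton_iff, Prod.ext_iff, Set.mem_inter_iff]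
  tauto

end AuxLemmas

/-- Conditional-entropy expansion of an optimizer (eq. (14) of Theorem 1's proof). -/
theorem optimizer_cond_entropy_expansion {𝒳 𝒴 𝒰 : Type*} [Fintype 𝒳] [Nonempty 𝒳] [MeasurableSpace 𝒳] [MeasurableSingletonClass 𝒳]
    [Fintype 𝒴] [Nonempty 𝒴] [MeasurableSpace 𝒴] [MeasurableSingletonClass 𝒴]
    [Fintype 𝒰] [Nonempty 𝒰] [MeasurableSpace 𝒰] [MeasurableSingletonClass 𝒰]
    (μ : Measure Ω) [IsProbabilityMeasure μ]
    (X : Ω → 𝒳) (Y : Ω → 𝒴) (U : Ω → 𝒰)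
    (hX : Measurable X) (hY : Measurable Y) (hU : Measurable U)
    (h1 : mutInfo μ X U = 0)
    (h2 : condMutInfo μ X U Y = 0)
    (h3 : condEnt μ Y (fun ω => (X ω, U ω)) = 0) :
    ∀ x : 𝒳, 0 < μ (X ⁻¹' {x}) →
      ent μ U = ent (μ[|X ⁻¹' {x}]) Y
        + ∑ y : 𝒴, ((μ[|X ⁻¹' {x}]) (Y ⁻¹' {y})).toReal * ent (μ[|Y ⁻¹' {y}]) U := by
  classical
  intro x hx
  have msX : ∀ a : 𝒳, MeasurableSet (X ⁻¹' {a}) := fun a => hX (measurableSet_singleton a)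
  have msY : ∀ b : 𝒴, MeasurableSet (Y ⁻¹' {b}) := fun b => hY (measurableSet_singleton b)
  set p3 : 𝒳 → 𝒴 → 𝒰 → ℝ :=
    fun a b c => (μ (X ⁻¹' {a} ∩ Y ⁻¹' {b} ∩ U ⁻¹' {c})).toReal with hp3def
  set pXY : 𝒳 → 𝒴 → ℝ := fun a b => (μ (X ⁻¹' {a} ∩ Y ⁻¹' {b})).toReal with hpXYdef
  set pXU : 𝒳 → 𝒰 → ℝ := fun a c => (μ (X ⁻¹' {a} ∩ U ⁻¹' {c})).toReal with hpXUdef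
  set pYU : 𝒴 → 𝒰 → ℝ := fun b c => (μ (Y ⁻¹' {b} ∩ U ⁻¹' {c})).toReal with hpYUdef
  set pX : 𝒳 → ℝ := fun a => (μ (X ⁻¹' {a})).toReal with hpXdef
  set pY : 𝒴 → ℝ := fun b => (μ (Y ⁻¹' {b})).toReal with hpYdef
  set pU : 𝒰 → ℝ := fun c => (μ (U ⁻¹' {c})).toReal with hpUdef
  have nn : ∀ s : Set Ω, 0 ≤ (μ s).toReal := fun s => ENNReal.toReal_nonneg
  have mono : ∀ {s t : Set Ω}, s ⊆ t → (μ s).toReal ≤ (μ t).toReal :=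
    fun h => ENNReal.toReal_mono (measure_ne_top μ _) (measure_mono h)
  -- marginalization lemmas
  have mXY : ∀ a b, pXY a b = ∑ c, p3 a b c := fun a b =>
    aux_meas_decomp μ U hU (X ⁻¹' {a} ∩ Y ⁻¹' {b})
  have mXU : ∀ a c, pXU a c = ∑ b, p3 a b c := by
    intro a c
    rw [show pXU a c = (μ (X ⁻¹' {a} ∩ U ⁻¹' {c})).toReal from rfl,
      aux_meas_decomp μ Y hY (X ⁻¹' {a} ∩ U ⁻¹' {c})]
    refine Finset.sum_congr rfl fun b _ => ?_
    have hset : X ⁻¹' {a} ∩ U ⁻¹' {c} ∩ Y ⁻¹' {b} = X ⁻¹' {a} ∩ Y ⁻¹' {b} ∩ U ⁻¹' {c} := by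
      ext ω
      simp only [Set.mem_inter_iff, Set.mem_preimage, Set.mem_singleton_iff]
      tauto
    rw [hset]
  have mYU : ∀ b c, pYU b c = ∑ a, p3 a b c := by
    intro b c
    rw [show pYU b c = (μ (Y ⁻¹' {b} ∩ U ⁻¹' {c})).toReal from rfl,
      aux_meas_decomp μ X hX (Y ⁻¹' {b} ∩ U ⁻¹' {c})]
    refine Finset.sum_congr rfl fun a _ => ?_
    have hset : Y ⁻¹' {b} ∩ U ⁻¹' {c} ∩ X ⁻¹' {a} = X ⁻¹' {a} ∩ Y ⁻¹' {b} ∩ U ⁻¹' {c} := by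
      ext ω
      simp only [Set.mem_inter_iff, Set.mem_preimage, Set.mem_singleton_iff]
      tauto
    rw [hset]
  have mXb : ∀ a, pX a = ∑ b, pXY a b := fun a => aux_meas_decomp μ Y hY (X ⁻¹' {a})
  have mXc : ∀ a, pX a = ∑ c, pXU a c := fun a => aux_meas_decomp μ U hU (X ⁻¹' {a})
  have mYa : ∀ b, pY b = ∑ a, pXY a b := by
    intro b
    rw [show pY b = (μ (Y ⁻¹' {b})).toReal from rfl, aux_meas_decomp μ X hX (Y ⁻¹' {b})]
    refine Finset.sum_congr rfl fun a _ => ?_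
    rw [Set.inter_comm]
  have mYc : ∀ b, pY b = ∑ c, pYU b c := fun b => aux_meas_decomp μ U hU (Y ⁻¹' {b})
  have mUa : ∀ c, pU c = ∑ a, pXU a c := by
    intro c
    rw [show pU c = (μ (U ⁻¹' {c})).toReal from rfl, aux_meas_decomp μ X hX (U ⁻¹' {c})]
    refine Finset.sum_congr rfl fun a _ => ?_
    rw [Set.inter_comm]
  have sX : ∑ a, pX a = 1 := by
    have := aux_meas_decomp μ X hX Set.univ
    simp only [Set.univ_inter] at this
    rw [← this, measure_univ, ENNReal.toReal_one]
  have sY : ∑ b, pY b = 1 := by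
    have := aux_meas_decomp μ Y hY Set.univ
    simp only [Set.univ_inter] at this
    rw [← this, measure_univ, ENNReal.toReal_one]
  have sU : ∑ c, pU c = 1 := by
    have := aux_meas_decomp μ U hU Set.univ
    simp only [Set.univ_inter] at this
    rw [← this, measure_univ, ENNReal.toReal_one]
  -- entropy translations
  have eX : ent μ X = ∑ a, negMulLog (pX a) := rfl
  have eY : ent μ Y = ∑ b, negMulLog (pY b) := rfl
  have eU : ent μ U = ∑ c, negMulLog (pU c) := rfl
  have eXU : ent μ (fun ω => (X ω, U ω)) = ∑ a, ∑ c, negMulLog (pXU a c) :=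
    aux_ent_pair μ X U
  have eXY : ent μ (fun ω => (X ω, Y ω)) = ∑ a, ∑ b, negMulLog (pXY a b) :=
    aux_ent_pair μ X Y
  have eUY : ent μ (fun ω => (U ω, Y ω)) = ∑ c, ∑ b, negMulLog (pYU b c) := by
    rw [aux_ent_pair μ U Y]
    refine Finset.sum_congr rfl fun c _ => Finset.sum_congr rfl fun b _ => ?_
    rw [show pYU b c = (μ (Y ⁻¹' {b} ∩ U ⁻¹' {c})).toReal from rfl, Set.inter_comm]
  have eXUY : ent μ (fun ω => (X ω, U ω, Y ω)) = ∑ a, ∑ c, ∑ b, negMulLog (p3 a b c) := by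
    rw [aux_ent_triple μ X U Y]
    refine Finset.sum_congr rfl fun a _ => Finset.sum_congr rfl fun c _ =>
      Finset.sum_congr rfl fun b _ => ?_
    have hset : X ⁻¹' {a} ∩ U ⁻¹' {c} ∩ Y ⁻¹' {b} = X ⁻¹' {a} ∩ Y ⁻¹' {b} ∩ U ⁻¹' {c} := by
      ext ω
      simp only [Set.mem_inter_iff, Set.mem_preimage, Set.mem_singleton_iff]
      tauto
    rw [show p3 a b c = (μ (X ⁻¹' {a} ∩ Y ⁻¹' {b} ∩ U ⁻¹' {c})).toReal from rfl, hset]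
  have eYXU : ent μ (fun ω => (Y ω, X ω, U ω)) = ∑ b, ∑ a, ∑ c, negMulLog (p3 a b c) := by
    rw [aux_ent_triple μ Y X U]
    refine Finset.sum_congr rfl fun b _ => Finset.sum_congr rfl fun a _ =>
      Finset.sum_congr rfl fun c _ => ?_
    have hset : Y ⁻¹' {b} ∩ X ⁻¹' {a} ∩ U ⁻¹' {c} = X ⁻¹' {a} ∩ Y ⁻¹' {b} ∩ U ⁻¹' {c} := by
      ext ω
      simp only [Set.mem_inter_iff, Set.mem_preimage, Set.mem_singleton_iff]
      tauto
    rw [show p3 a b c = (μ (X ⁻¹' {a} ∩ Y ⁻¹' {b} ∩ U ⁻¹' {c})).toReal from rfl, hset]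
  -- convert hypotheses
  have hI1 : ∑ a, ∑ c, negMulLog (pXU a c)
      = (∑ a, negMulLog (pX a)) + ∑ c, negMulLog (pU c) := by
    rw [mutInfo] at h1
    rw [eXU, eX, eU] at h1
    linarith
  have hI2 : ∑ a, ∑ c, ∑ b, negMulLog (p3 a b c)
      = (∑ a, ∑ b, negMulLog (pXY a b)) + (∑ c, ∑ b, negMulLog (pYU b c))
        - ∑ b, negMulLog (pY b) := by
    rw [condMutInfo] at h2
    rw [eXY, eUY, eXUY, eY] at h2
    linarith
  have hI3 : ∑ b, ∑ a, ∑ c, negMulLog (p3 a b c) = ∑ a, ∑ c, negMulLog (pXU a c) := by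
    rw [condEnt] at h3
    rw [eYXU, eXU] at h3
    linarith
  -- independence of X and U
  have hA : ∀ a c, pXU a c = pX a * pU c := by
    have key := aux_gibbs (ι := 𝒳 × 𝒰) (fun i => pX i.1 * pU i.2) (fun i => pXU i.1 i.2)
      (fun i => mul_nonneg (nn _) (nn _)) (fun i => nn _)
      ?_ ?_ ?_ ?_
    · intro a c; exact key (a, c)
    · rintro ⟨a, c⟩ h
      rcases mul_eq_zero.1 h with h' | h'
      · exact le_antisymm ((mono Set.inter_subset_left).trans h'.le) (nn _)
      · exact le_antisymm ((mono Set.inter_subset_right).trans h'.le) (nn _)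
    · rw [Fintype.sum_prod_type, ← Finset.sum_mul_sum, sX, sU, one_mul]
    · rw [Fintype.sum_prod_type]
      simp only [← mXc]
      exact sX
    · rw [Fintype.sum_prod_type]
      have hsplit : ∀ a c, pXU a c * Real.log (pXU a c) - pXU a c * Real.log (pX a * pU c)
          = -negMulLog (pXU a c) + pXU a c * Real.log (pX a) * (-1)
            + pXU a c * Real.log (pU c) * (-1) := by
        intro a c
        by_cases h : pXU a c = 0
        · simp [h]
        · have hXa : pXU a c ≤ pX a := mono Set.inter_subset_left
          have hUc : pXU a c ≤ pU c := mono Set.inter_subset_right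
          have hpos : 0 < pXU a c := lt_of_le_of_ne (nn _) (Ne.symm h)
          rw [Real.log_mul (by linarith) (by linarith)]
          simp only [negMulLog, neg_mul]
          ring
      simp only [hsplit]
      have e1 : ∀ a, ∑ c, (-negMulLog (pXU a c) + pXU a c * Real.log (pX a) * (-1)
            + pXU a c * Real.log (pU c) * (-1))
          = (∑ c, -negMulLog (pXU a c)) + pX a * Real.log (pX a) * (-1)
            + ∑ c, pXU a c * Real.log (pU c) * (-1) := by
        intro a
        rw [Finset.sum_add_distrib, Finset.sum_add_distrib]
        congr 2
        rw [← Finset.sum_mul, ← Finset.sum_mul, ← mXc]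
      simp only [e1]
      rw [Finset.sum_add_distrib, Finset.sum_add_distrib]
      have e2 : ∑ a, ∑ c, pXU a c * Real.log (pU c) * (-1)
          = ∑ c, pU c * Real.log (pU c) * (-1) := by
        rw [Finset.sum_comm]
        refine Finset.sum_congr rfl fun c _ => ?_
        rw [← Finset.sum_mul, ← Finset.sum_mul, ← mUa]
      rw [e2]
      have e3 : ∀ (t : ℝ), t * Real.log t * (-1) = negMulLog t := by
        intro t; simp only [negMulLog, neg_mul]; ring
      simp only [e3]
      have e4 : ∑ a, ∑ c, -negMulLog (pXU a c) = -∑ a, ∑ c, negMulLog (pXU a c) := by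
        simp
      rw [e4]
      linarith [hI1]
  -- conditional independence of X and U given Y
  have hB : ∀ a b c, p3 a b c = pXY a b * pYU b c / pY b := by
    have key := aux_gibbs (ι := 𝒳 × 𝒴 × 𝒰)
      (fun i => pXY i.1 i.2.1 * pYU i.2.1 i.2.2 / pY i.2.1)
      (fun i => p3 i.1 i.2.1 i.2.2)
      (fun i => div_nonneg (mul_nonneg (nn _) (nn _)) (nn _)) (fun i => nn _)
      ?_ ?_ ?_ ?_
    · intro a b c; exact key (a, b, c)
    · rintro ⟨a, b, c⟩ h
      simp only [div_eq_zero_iff, mul_eq_zero] at h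
      have hY0 : pY b = 0 → p3 a b c = 0 := fun h' =>
        le_antisymm ((mono (Set.inter_subset_left.trans Set.inter_subset_right)).trans h'.le)
          (nn _)
      rcases h with (h' | h') | h'
      · exact le_antisymm ((mono Set.inter_subset_left).trans h'.le) (nn _)
      · refine le_antisymm (le_trans ?_ h'.le) (nn _)
        refine mono fun ω hω => ?_
        exact ⟨hω.1.2, hω.2⟩
      · exact hY0 h'
    · rw [Fintype.sum_prod_type]
      have e1 : ∀ a, ∑ i : 𝒴 × 𝒰, pXY a i.1 * pYU i.1 i.2 / pY i.1
          = ∑ b, pXY a b * (∑ c, pYU b c) / pY b := by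
        intro a
        rw [Fintype.sum_prod_type]
        refine Finset.sum_congr rfl fun b _ => ?_
        rw [Finset.mul_sum, Finset.sum_div]
      simp only [e1]
      rw [Finset.sum_comm]
      have e2 : ∀ b, ∑ a, pXY a b * (∑ c, pYU b c) / pY b = pY b := by
        intro b
        rw [← Finset.sum_div, ← Finset.sum_mul, ← mYa, ← mYc]
        by_cases h : pY b = 0
        · simp [h]
        · field_simp
      simp only [e2, sY]
    · rw [Fintype.sum_prod_type]
      have e1 : ∀ a, ∑ i : 𝒴 × 𝒰, p3 a i.1 i.2 = ∑ b, pXY a b := by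
        intro a
        rw [Fintype.sum_prod_type]
        exact Finset.sum_congr rfl fun b _ => (mXY a b).symm
      simp only [e1, ← mXb, sX]
    · have hsplit : ∀ (i : 𝒳 × 𝒴 × 𝒰),
          p3 i.1 i.2.1 i.2.2 * Real.log (p3 i.1 i.2.1 i.2.2)
            - p3 i.1 i.2.1 i.2.2 * Real.log (pXY i.1 i.2.1 * pYU i.2.1 i.2.2 / pY i.2.1)
          = -negMulLog (p3 i.1 i.2.1 i.2.2)
            + p3 i.1 i.2.1 i.2.2 * Real.log (pXY i.1 i.2.1) * (-1)
            + p3 i.1 i.2.1 i.2.2 * Real.log (pYU i.2.1 i.2.2) * (-1)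
            + p3 i.1 i.2.1 i.2.2 * Real.log (pY i.2.1) := by
        rintro ⟨a, b, c⟩
        by_cases h : p3 a b c = 0
        · simp [h]
        · have hpos : 0 < p3 a b c := lt_of_le_of_ne (nn _) (Ne.symm h)
          have h1' : p3 a b c ≤ pXY a b := mono Set.inter_subset_left
          have h2' : p3 a b c ≤ pYU b c := mono fun ω hω => ⟨hω.1.2, hω.2⟩
          have h3' : p3 a b c ≤ pY b :=
            mono (Set.inter_subset_left.trans Set.inter_subset_right)
          rw [Real.log_div (ne_of_gt (mul_pos (by linarith) (by linarith))) (by linarith),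
            Real.log_mul (by linarith) (by linarith)]
          simp only [negMulLog, neg_mul]
          ring
      simp only [hsplit]
      rw [Finset.sum_add_distrib, Finset.sum_add_distrib, Finset.sum_add_distrib]
      have t1 : ∑ i : 𝒳 × 𝒴 × 𝒰, -negMulLog (p3 i.1 i.2.1 i.2.2)
          = -∑ a, ∑ c, ∑ b, negMulLog (p3 a b c) := by
        rw [Fintype.sum_prod_type]
        have inner : ∀ a : 𝒳, ∑ i : 𝒴 × 𝒰, -negMulLog (p3 a i.1 i.2)
            = -∑ c, ∑ b, negMulLog (p3 a b c) := by
          intro a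
          rw [Fintype.sum_prod_type, Finset.sum_comm]
          simp
        simp only [inner]
        simp
      have t2 : ∑ i : 𝒳 × 𝒴 × 𝒰, p3 i.1 i.2.1 i.2.2 * Real.log (pXY i.1 i.2.1) * (-1)
          = ∑ a, ∑ b, negMulLog (pXY a b) := by
        rw [Fintype.sum_prod_type]
        refine Finset.sum_congr rfl fun a _ => ?_
        rw [Fintype.sum_prod_type]
        refine Finset.sum_congr rfl fun b _ => ?_
        dsimp only
        rw [← Finset.sum_mul, ← Finset.sum_mul, ← mXY]
        simp only [negMulLog, neg_mul]
        ring
      have t3 : ∑ i : 𝒳 × 𝒴 × 𝒰, p3 i.1 i.2.1 i.2.2 * Real.log (pYU i.2.1 i.2.2) * (-1)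
          = ∑ b, ∑ c, negMulLog (pYU b c) := by
        rw [Fintype.sum_prod_type, Finset.sum_comm, Fintype.sum_prod_type]
        refine Finset.sum_congr rfl fun b _ => Finset.sum_congr rfl fun c _ => ?_
        dsimp only
        rw [← Finset.sum_mul, ← Finset.sum_mul, ← mYU]
        simp only [negMulLog, neg_mul]
        ring
      have t4 : ∑ i : 𝒳 × 𝒴 × 𝒰, p3 i.1 i.2.1 i.2.2 * Real.log (pY i.2.1)
          = ∑ b, (- negMulLog (pY b)) := by
        rw [Fintype.sum_prod_type, Finset.sum_comm, Fintype.sum_prod_type]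
        refine Finset.sum_congr rfl fun b _ => ?_
        have inner : ∀ c, ∑ a, p3 a b c * Real.log (pY b) = pYU b c * Real.log (pY b) :=
          fun c => by rw [← Finset.sum_mul, ← mYU]
        dsimp only
        simp only [inner]
        rw [← Finset.sum_mul, ← mYc]
        simp only [negMulLog, neg_mul, neg_neg]
      rw [t1, t2, t3, t4]
      have swap3 : ∑ c, ∑ b, negMulLog (pYU b c) = ∑ b, ∑ c, negMulLog (pYU b c) :=
        Finset.sum_comm
      have neg4 : ∑ b, (- negMulLog (pY b)) = -∑ b, negMulLog (pY b) := by simp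
      rw [neg4]
      linarith [hI2]
  -- determinism of Y given (X, U)
  have each : ∀ a c, ∑ b, negMulLog (p3 a b c) ≤ negMulLog (∑ b, p3 a b c) := by
    have brnn : ∀ (i : 𝒳) (_ : i ∈ Finset.univ) (c : 𝒰) (_ : c ∈ Finset.univ),
        0 ≤ ∑ b, negMulLog (p3 i b c) - negMulLog (∑ b, p3 i b c) := by
      intro a _ c _
      have := aux_negMulLog_sum_le (fun b => p3 a b c) (fun b => nn _)
      linarith
    have total : ∑ a, ∑ c, (∑ b, negMulLog (p3 a b c) - negMulLog (∑ b, p3 a b c)) = 0 := by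
      have e1 : ∀ a, ∑ c, (∑ b, negMulLog (p3 a b c) - negMulLog (∑ b, p3 a b c))
          = (∑ c, ∑ b, negMulLog (p3 a b c)) - ∑ c, negMulLog (pXU a c) := by
        intro a
        rw [Finset.sum_sub_distrib]
        congr 1
        exact Finset.sum_congr rfl fun c _ => by rw [← mXU]
      simp only [e1]
      rw [Finset.sum_sub_distrib]
      have swap : ∑ b, ∑ a, ∑ c, negMulLog (p3 a b c)
          = ∑ a, ∑ c, ∑ b, negMulLog (p3 a b c) := by
        rw [Finset.sum_comm]
        exact Finset.sum_congr rfl fun a _ => Finset.sum_comm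
      linarith [hI3]
    have outer : ∀ a ∈ Finset.univ (α := 𝒳),
        ∑ c, (∑ b, negMulLog (p3 a b c) - negMulLog (∑ b, p3 a b c)) = 0 := by
      refine (Finset.sum_eq_zero_iff_of_nonneg ?_).1 total
      intro a _
      exact Finset.sum_nonneg (fun c hc => brnn a (Finset.mem_univ a) c hc)
    intro a c
    have := (Finset.sum_eq_zero_iff_of_nonneg
      (fun c hc => brnn a (Finset.mem_univ a) c hc)).1 (outer a (Finset.mem_univ a)) c
      (Finset.mem_univ c)
    linarith [this]
  have hC : ∀ a c b b', p3 a b c ≠ 0 → p3 a b' c ≠ 0 → b = b' := fun a c =>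
    aux_support_unique (fun b => p3 a b c) (fun b => nn _) (each a c)
  -- final assembly
  have hpx : 0 < pX x := ENNReal.toReal_pos hx.ne' (measure_ne_top μ _)
  set q : 𝒴 → ℝ := fun b => pXY x b / pX x with hqdef
  set r : 𝒴 → 𝒰 → ℝ := fun b c => pYU b c / pY b with hrdef
  have condY : ∀ b, ((μ[|X ⁻¹' {x}]) (Y ⁻¹' {b})).toReal = q b := by
    intro b
    rw [cond_apply (msX x) μ (Y ⁻¹' {b}), ENNReal.toReal_mul, ENNReal.toReal_inv,
      inv_mul_eq_div]
  have eCondY : ent (μ[|X ⁻¹' {x}]) Y = ∑ b, negMulLog (q b) := by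
    rw [ent]
    exact Finset.sum_congr rfl fun b _ => by rw [condY b]
  have hq0 : ∀ b, pY b = 0 → q b = 0 := by
    intro b hyb
    have h' : pXY x b = 0 :=
      le_antisymm ((mono Set.inter_subset_right).trans hyb.le) (nn _)
    simp only [hqdef]
    rw [h', zero_div]
  have hterm : ∀ b, ((μ[|X ⁻¹' {x}]) (Y ⁻¹' {b})).toReal * ent (μ[|Y ⁻¹' {b}]) U
      = q b * ∑ c, negMulLog (r b c) := by
    intro b
    rw [condY b]
    by_cases hyb : pY b = 0
    · rw [hq0 b hyb, zero_mul, zero_mul]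
    · congr 1
      rw [ent]
      refine Finset.sum_congr rfl fun c _ => ?_
      rw [cond_apply (msY b) μ (U ⁻¹' {c}), ENNReal.toReal_mul, ENNReal.toReal_inv,
        inv_mul_eq_div]
  rw [eU, eCondY, Finset.sum_congr rfl fun b _ => hterm b]
  set s' : 𝒴 → 𝒰 → ℝ := fun b c => q b * r b c with hsdef
  have hs_p3 : ∀ b c, s' b c = p3 x b c / pX x := by
    intro b c
    by_cases hyb : pY b = 0
    · have h3' : p3 x b c = 0 :=
        le_antisymm ((mono (Set.inter_subset_left.trans Set.inter_subset_right)).trans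
          hyb.le) (nn _)
      have hU0 : pYU b c = 0 :=
        le_antisymm ((mono Set.inter_subset_left).trans hyb.le) (nn _)
      simp only [hsdef, hrdef]
      rw [hU0, zero_div, mul_zero, h3', zero_div]
    · simp only [hsdef, hrdef, hqdef]
      rw [hB x b c, div_mul_div_comm, div_div, mul_comm (pX x) (pY b)]
  have hsum_s : ∀ c, ∑ b, s' b c = pU c := by
    intro c
    simp only [hs_p3]
    rw [← Finset.sum_div, ← mXU, hA x c]
    field_simp
  have step2 : ∀ c, negMulLog (pU c) = ∑ b, negMulLog (s' b c) := by
    intro c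
    have huniq : ∀ b b', s' b c ≠ 0 → s' b' c ≠ 0 → b = b' := by
      intro b b' hb hb'
      have hp3b : p3 x b c ≠ 0 := fun h0 => hb (by rw [hs_p3 b c, h0, zero_div])
      have hp3b' : p3 x b' c ≠ 0 := fun h0 => hb' (by rw [hs_p3 b' c, h0, zero_div])
      exact hC x c b b' hp3b hp3b'
    rw [← hsum_s c, aux_negMulLog_single _ huniq]
  calc ∑ c, negMulLog (pU c) = ∑ c, ∑ b, negMulLog (s' b c) :=
        Finset.sum_congr rfl fun c _ => step2 c
    _ = ∑ b, ∑ c, negMulLog (s' b c) := Finset.sum_comm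
    _ = ∑ b, ∑ c, (r b c * negMulLog (q b) + q b * negMulLog (r b c)) := by
        refine Finset.sum_congr rfl fun b _ => Finset.sum_congr rfl fun c _ => ?_
        rw [hsdef]
        exact negMulLog_mul (q b) (r b c)
    _ = ∑ b, (negMulLog (q b) * ∑ c, r b c + q b * ∑ c, negMulLog (r b c)) := by
        refine Finset.sum_congr rfl fun b _ => ?_
        rw [Finset.sum_add_distrib, ← Finset.mul_sum, ← Finset.sum_mul]
        ring
    _ = ∑ b, (negMulLog (q b) + q b * ∑ c, negMulLog (r b c)) := by
        refine Finset.sum_congr rfl fun b _ => ?_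
        by_cases hyb : pY b = 0
        · rw [hq0 b hyb]
          simp
        · have hr1 : ∑ c, r b c = 1 := by
            simp only [hrdef]
            rw [← Finset.sum_div, ← mYc]
            field_simp
          rw [hr1, mul_one]
    _ = (∑ b, negMulLog (q b)) + ∑ b, q b * ∑ c, negMulLog (r b c) :=
        Finset.sum_add_distrib
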